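/- Let p be a prime, n ≥ 1, and A a row-stochastic n×n matrix over F_p = ZMod p. Then the iteration x(t+1) = A x(t) achieves consensus if and only if the characteristic polynomial of A over F_p equals X^{n−1}·(X − 1). -/

import Mathlib

open Matrix Polynomial

namespace ConsensusAux

variable {R : Type*} [CommRing R] {m : ℕ}

/-- Change of basis matrix whose first column is the all-ones vector. -/
def Pmat (R : Type*) [CommRing R] (m : ℕ) : Matrix (Fin (m+1)) (Fin (m+1)) R :=
  Matrix.of fun i j => if j = 0 then 1 else if i = j then 1 else 0

/-- Inverse of `Pmat`. -/
def Qmat (R : Type*) [CommRing R] (m : ℕ) : Matrix (Fin (m+1)) (Fin (m+1)) R :=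
  Matrix.of fun i j => if j = 0 then (if i = 0 then 1 else -1) else if i = j then 1 else 0

lemma ne_succ (k : Fin m) : (0 : Fin (m+1)) ≠ k.succ := (Fin.succ_ne_zero k).symm

lemma Qmat_mul_Pmat : Qmat R m * Pmat R m = 1 := by
  ext i j
  rcases Fin.eq_zero_or_eq_succ j with rfl | ⟨j', rfl⟩ <;>
    rcases Fin.eq_zero_or_eq_succ i with rfl | ⟨i', rfl⟩ <;>
      simp [Qmat, Pmat, Matrix.mul_apply, Fin.sum_univ_succ, Fin.succ_ne_zero, ne_succ,
        Matrix.one_apply, Fin.succ_inj]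

lemma Pmat_mul_Qmat : Pmat R m * Qmat R m = 1 := by
  ext i j
  rcases Fin.eq_zero_or_eq_succ j with rfl | ⟨j', rfl⟩ <;>
    rcases Fin.eq_zero_or_eq_succ i with rfl | ⟨i', rfl⟩ <;>
      simp [Qmat, Pmat, Matrix.mul_apply, Fin.sum_univ_succ, Fin.succ_ne_zero, ne_succ,
        Matrix.one_apply, Fin.succ_inj]

lemma Pmat_mulVec_single : Pmat R m *ᵥ Pi.single 0 1 = (1 : Fin (m+1) → R) := by
  ext i
  simp [Pmat]

lemma Qmat_mulVec_one : Qmat R m *ᵥ (1 : Fin (m+1) → R) = Pi.single 0 1 := by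
  ext i
  rcases Fin.eq_zero_or_eq_succ i with rfl | ⟨i', rfl⟩ <;>
    simp [Qmat, Matrix.mulVec, dotProduct, Fin.sum_univ_succ, Fin.succ_ne_zero, ne_succ,
      Pi.single_apply, Fin.succ_inj]

lemma charpoly_of_firstCol (M : Matrix (Fin (m+1)) (Fin (m+1)) R)
    (hM : ∀ i, M i 0 = if i = 0 then 1 else 0) :
    M.charpoly = (X - 1) * (M.submatrix Fin.succ Fin.succ).charpoly := by
  have hsub : (charmatrix M).submatrix Fin.succ Fin.succ
      = charmatrix (M.submatrix Fin.succ Fin.succ) := by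
    ext i j
    by_cases h : i = j
    · subst h; simp
    · rw [Matrix.submatrix_apply, charmatrix_apply_ne _ _ _ (fun hc => h (Fin.succ_injective _ hc)),
        charmatrix_apply_ne _ _ _ h, Matrix.submatrix_apply]
  have hcol : ∀ i, charmatrix M i 0 = if i = 0 then X - 1 else 0 := by
    intro i
    by_cases h : i = 0
    · subst h; simp [hM 0, Polynomial.C_1]
    · rw [charmatrix_apply_ne _ _ _ h, hM, if_neg h]; simp [h]
  rw [Matrix.charpoly, Matrix.det_succ_column_zero, Finset.sum_eq_single 0]
  · rw [hcol 0, if_pos rfl, Fin.succAbove_zero, hsub]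
    simp [Matrix.charpoly]
  · intro i _ hi
    rw [hcol i, if_neg hi, mul_zero, zero_mul]
  · intro h; exact absurd (Finset.mem_univ 0) h

lemma pow_col (M : Matrix (Fin (m+1)) (Fin (m+1)) R)
    (hM : ∀ i, M i 0 = if i = 0 then 1 else 0) (t : ℕ) :
    ∀ i, (M ^ t) i 0 = if i = 0 then 1 else 0 := by
  induction t with
  | zero => intro i; simp [Matrix.one_apply]
  | succ t ih =>
    intro i
    rw [pow_succ, Matrix.mul_apply]
    calc ∑ k, (M ^ t) i k * M k 0 = ∑ k, (M ^ t) i k * (if k = 0 then 1 else 0) := by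
          simp_rw [hM]
      _ = (M ^ t) i 0 := by simp
      _ = if i = 0 then 1 else 0 := ih i

lemma pow_submatrix (M : Matrix (Fin (m+1)) (Fin (m+1)) R)
    (h0 : ∀ i : Fin m, M i.succ 0 = 0) (t : ℕ) :
    (M ^ t).submatrix Fin.succ Fin.succ = (M.submatrix Fin.succ Fin.succ) ^ t := by
  induction t with
  | zero =>
    simp [pow_zero, Matrix.submatrix_one _ (Fin.succ_injective m)]
  | succ t ih =>
    ext i j
    rw [pow_succ', Matrix.submatrix_apply, Matrix.mul_apply, Fin.sum_univ_succ, h0 i, zero_mul,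
      zero_add]
    rw [pow_succ', Matrix.mul_apply]
    refine Finset.sum_congr rfl fun k _ => ?_
    rw [← ih]
    rfl

end ConsensusAux

open ConsensusAux

set_option maxHeartbeats 1000000
set_option synthInstance.maxHeartbeats 400000

/-- A row-stochastic matrix over `ZMod p` achieves consensus if and only if
its characteristic polynomial is `X^(n-1) * (X - 1)`. -/
theorem finiteField_consensus_iff_charpoly
    (p n : ℕ) [Fact p.Prime] (hn : 1 ≤ n)
    (A : Matrix (Fin n) (Fin n) (ZMod p))
    (hA : A *ᵥ (1 : Fin n → ZMod p) = 1) :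
    (∀ x0 : Fin n → ZMod p, ∃ T : ℕ, ∃ α : ZMod p,
      ∀ t ≥ T, (A ^ t) *ᵥ x0 = α • (1 : Fin n → ZMod p)) ↔
    A.charpoly = X ^ (n - 1) * (X - 1) := by
  haveI : NeZero p := ⟨(Fact.out : p.Prime).ne_zero⟩
  obtain ⟨m, rfl⟩ : ∃ m, n = m + 1 := ⟨n - 1, (Nat.succ_pred_eq_of_pos hn).symm⟩
  simp only [Nat.add_sub_cancel]
  set P : Matrix (Fin (m+1)) (Fin (m+1)) (ZMod p) := Pmat (ZMod p) m with hPdef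
  set Q : Matrix (Fin (m+1)) (Fin (m+1)) (ZMod p) := Qmat (ZMod p) m with hQdef
  have hQP : Q * P = 1 := Qmat_mul_Pmat
  have hPQ : P * Q = 1 := Pmat_mul_Qmat
  set M := Q * A * P with hMdef
  set B := M.submatrix Fin.succ Fin.succ with hBdef
  have hMcol : ∀ i, M i 0 = if i = 0 then 1 else 0 := by
    have h1 : M *ᵥ Pi.single 0 1 = Pi.single (0 : Fin (m+1)) (1 : ZMod p) := by
      have h2 : M *ᵥ Pi.single 0 1 = Q *ᵥ (A *ᵥ (P *ᵥ Pi.single 0 1)) := by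
        rw [Matrix.mulVec_mulVec, Matrix.mulVec_mulVec, hMdef]
      rw [h2, Pmat_mulVec_single, hA, Qmat_mulVec_one]
    intro i
    have h3 := congrFun h1 i
    simpa [Pi.single_apply] using h3
  have hB0 : ∀ i : Fin m, M i.succ 0 = 0 := fun i => by
    rw [hMcol i.succ, if_neg (Fin.succ_ne_zero i)]
  -- conjugation invariance of charpoly
  have hconj : M.charpoly = A.charpoly := by
    have h1 : (Q.map C) * (P.map C) = 1 := by
      rw [← Matrix.map_mul, hQP, Matrix.map_one _ (map_zero C) (map_one C)]
    have key : charmatrix M = Q.map C * charmatrix A * P.map C := by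
      rw [charmatrix, charmatrix, Matrix.mul_sub, Matrix.sub_mul]
      congr 1
      · rw [← (Matrix.scalar_commute (X : (ZMod p)[X]) (fun r' => Commute.all _ _) (Q.map C)).eq,
          mul_assoc, h1, mul_one]
      · simp only [RingHom.mapMatrix_apply, hMdef, Matrix.map_mul]
    rw [Matrix.charpoly, key, Matrix.det_mul, Matrix.det_mul, Matrix.charpoly]
    have h2 : (Q.map C).det * (P.map C).det = 1 := by
      rw [← Matrix.det_mul, h1, Matrix.det_one]
    calc (Q.map C).det * (charmatrix A).det * (P.map C).det
        = (charmatrix A).det * ((Q.map C).det * (P.map C).det) := by ring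
      _ = (charmatrix A).det := by rw [h2, mul_one]
  have hchar : A.charpoly = (X - 1) * B.charpoly := by
    rw [← hconj, charpoly_of_firstCol M hMcol, hBdef]
  have hAP : ∀ t : ℕ, A ^ t * P = P * M ^ t := by
    have h1 : A * P = P * M := by
      rw [hMdef, ← mul_assoc, ← mul_assoc, hPQ, one_mul]
    intro t
    induction t with
    | zero => simp
    | succ t ih =>
      rw [pow_succ', pow_succ', mul_assoc, ih, ← mul_assoc, h1, mul_assoc]
  have hfix : ∀ k : ℕ, (M ^ k) *ᵥ Pi.single 0 1 = Pi.single (0 : Fin (m+1)) (1 : ZMod p) := by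
    intro k
    ext i
    have h := pow_col M hMcol k i
    simp only [Matrix.mulVec_single_one, Matrix.col_apply, mul_one, Pi.single_apply]
    exact h
  constructor
  · intro hcons
    choose Tf αf hf using hcons
    set T := Finset.univ.sup Tf with hT
    have hBT : B ^ T = 0 := by
      ext i j
      set x0 := P *ᵥ Pi.single j.succ 1 with hx0
      have h1 := hf x0 T (Finset.le_sup (Finset.mem_univ x0))
      have h2 : (A ^ T) *ᵥ x0 = P *ᵥ ((M ^ T) *ᵥ Pi.single j.succ 1) := by
        rw [hx0, Matrix.mulVec_mulVec, hAP T, ← Matrix.mulVec_mulVec]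
      have h3 : (M ^ T) *ᵥ Pi.single j.succ 1 = αf x0 • (Pi.single 0 1 : Fin (m+1) → ZMod p) := by
        have h4 : P *ᵥ ((M ^ T) *ᵥ Pi.single j.succ 1) = αf x0 • 1 := h2.symm.trans h1
        have h5 := congrArg (fun v => Q *ᵥ v) h4
        have hq1 : Q *ᵥ (1 : Fin (m+1) → ZMod p) = Pi.single 0 1 := Qmat_mulVec_one
        simpa [Matrix.mulVec_mulVec, hQP, Matrix.one_mulVec, Matrix.mulVec_smul, hq1] using h5
      have h6 := congrFun h3 i.succ
      simp only [Matrix.mulVec_single_one, Matrix.col_apply, mul_one, Pi.smul_apply, Pi.single_apply,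
        Fin.succ_ne_zero, if_false, smul_eq_mul, mul_zero] at h6
      have h7 : (M ^ T) i.succ j.succ = (B ^ T) i j := by
        rw [← pow_submatrix M hB0 T]; rfl
      simp only [Matrix.zero_apply]
      rw [← h7]
      exact h6
    have hcB : B.charpoly = X ^ m := by
      have h := Matrix.isNilpotent_charpoly_sub_pow_of_isNilpotent ⟨T, hBT⟩
      rw [Fintype.card_fin] at h
      have h0 := h.eq_zero
      exact sub_eq_zero.mp h0
    rw [hchar, hcB]; ring
  · intro hchA
    have hcB : B.charpoly = X ^ m := by
      have hXne : (X - 1 : (ZMod p)[X]) ≠ 0 := by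
        simpa using Polynomial.X_sub_C_ne_zero (1 : ZMod p)
      have h1 : (X - 1 : (ZMod p)[X]) * B.charpoly = (X - 1) * X ^ m := by
        rw [← hchar, hchA]; ring
      exact mul_left_cancel₀ hXne h1
    have hBm : B ^ m = 0 := by
      have h := Matrix.aeval_self_charpoly B
      rwa [hcB, map_pow, aeval_X] at h
    intro x0
    set y := Q *ᵥ x0 with hy
    set c := ((M ^ m) *ᵥ y) 0 with hc
    refine ⟨m, c, fun t ht => ?_⟩
    have hMt0 : ∀ i' : Fin m, ((M ^ m) *ᵥ y) i'.succ = 0 := by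
      intro i'
      have hrow : ((M ^ m) *ᵥ y) i'.succ = ∑ k, (M ^ m) i'.succ k * y k := rfl
      rw [hrow, Fin.sum_univ_succ, pow_col M hMcol m i'.succ,
        if_neg (Fin.succ_ne_zero i'), zero_mul, zero_add]
      refine Finset.sum_eq_zero fun k _ => ?_
      have h7 : (M ^ m) i'.succ k.succ = (B ^ m) i' k := by
        rw [← pow_submatrix M hB0 m]; rfl
      rw [h7, hBm]
      simp
    have hMm : (M ^ m) *ᵥ y = c • (Pi.single 0 1 : Fin (m+1) → ZMod p) := by
      ext i
      rcases Fin.eq_zero_or_eq_succ i with rfl | ⟨i', rfl⟩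
      · rw [Pi.smul_apply, Pi.single_eq_same, smul_eq_mul, mul_one, hc]
      · rw [hMt0 i', Pi.smul_apply, Pi.single_eq_of_ne (Fin.succ_ne_zero i'), smul_eq_mul,
          mul_zero]
    obtain ⟨k, rfl⟩ := Nat.exists_eq_add_of_le ht
    have hx0P : P *ᵥ y = x0 := by
      rw [hy, Matrix.mulVec_mulVec, hPQ, Matrix.one_mulVec]
    have hpow : (M ^ (m + k)) *ᵥ y = (M ^ k) *ᵥ ((M ^ m) *ᵥ y) := by
      conv_rhs => rw [Matrix.mulVec_mulVec]
      rw [← pow_add, add_comm k m]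
    calc (A ^ (m + k)) *ᵥ x0 = (A ^ (m + k)) *ᵥ (P *ᵥ y) := by rw [hx0P]
      _ = (A ^ (m + k) * P) *ᵥ y := by rw [Matrix.mulVec_mulVec]
      _ = P *ᵥ ((M ^ (m + k)) *ᵥ y) := by rw [hAP, ← Matrix.mulVec_mulVec]
      _ = P *ᵥ ((M ^ k) *ᵥ ((M ^ m) *ᵥ y)) := by rw [hpow]
      _ = P *ᵥ (c • ((M ^ k) *ᵥ Pi.single 0 1)) := by
          rw [hMm, Matrix.mulVec_smul]
      _ = c • (1 : Fin (m+1) → ZMod p) := by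
          rw [hfix k, Matrix.mulVec_smul, Pmat_mulVec_single]
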